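/- arXiv:2104.14489 — 2 statements merged into one kernel-verified Lean document; each statement's English description precedes it below -/
import Mathlib

section
/- Let I be an interval of ℝ containing 0 and let f : I → ℝ be a differentiable non-negative function. Assume there is C > 0 such that |f'| ≤ C √f on I. Then for all x ∈ I, |√(f(x)) − √(f(0))| ≤ (C/2)|x|. -/
/-- If `f` is a differentiable non-negative function on an interval `I` containing `0`
with `|f'| ≤ C √f` on `I` for some `C > 0`, then
`|√(f x) − √(f 0)| ≤ (C/2) |x|` for all `x ∈ I`. -/
theorem stmt_0 (I : Set ℝ) (hI : I.OrdConnected) (h0 : (0:ℝ) ∈ I)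
    (f : ℝ → ℝ) (hf : ∀ x ∈ I, DifferentiableAt ℝ f x)
    (hnn : ∀ x ∈ I, 0 ≤ f x) (C : ℝ) (hC : 0 < C)
    (hder : ∀ x ∈ I, |deriv f x| ≤ C * Real.sqrt (f x)) :
    ∀ x ∈ I, |Real.sqrt (f x) - Real.sqrt (f 0)| ≤ C / 2 * |x| := by
  intro x hx
  have hconv : Convex ℝ I := hI.convex
  apply le_of_forall_pos_le_add
  intro ε hε
  set δ : ℝ := (ε / 2) ^ 2 with hδdef
  have hδ : 0 < δ := by positivity
  have hsqδ : Real.sqrt δ = ε / 2 := by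
    rw [hδdef, Real.sqrt_sq (by positivity)]
  -- √(a+δ) ≤ √a + ε/2 for a ≥ 0
  have hsq : ∀ a : ℝ, 0 ≤ a → Real.sqrt (a + δ) ≤ Real.sqrt a + ε / 2 := by
    intro a ha
    have h1 : a + δ ≤ (Real.sqrt a + Real.sqrt δ) ^ 2 := by
      nlinarith [Real.sq_sqrt ha, Real.sq_sqrt hδ.le, Real.sqrt_nonneg a, Real.sqrt_nonneg δ]
    calc Real.sqrt (a + δ) ≤ Real.sqrt ((Real.sqrt a + Real.sqrt δ) ^ 2) :=
          Real.sqrt_le_sqrt h1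
      _ = Real.sqrt a + Real.sqrt δ := Real.sqrt_sq (by positivity)
      _ = Real.sqrt a + ε / 2 := by rw [hsqδ]
  -- regularized function
  set g : ℝ → ℝ := fun t => Real.sqrt (f t + δ) with hgdef
  have hg' : ∀ t ∈ I, HasDerivWithinAt g (deriv f t / (2 * Real.sqrt (f t + δ))) I t := by
    intro t ht
    have hpos : f t + δ > 0 := by linarith [hnn t ht]
    have h1 : HasDerivAt (fun s => f s + δ) (deriv f t) t :=
      ((hf t ht).hasDerivAt).add_const δ
    have h2 := (Real.hasDerivAt_sqrt (ne_of_gt hpos)).comp t h1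
    have : HasDerivAt g (1 / (2 * Real.sqrt (f t + δ)) * deriv f t) t := h2
    have := this.hasDerivWithinAt (s := I)
    rw [show deriv f t / (2 * Real.sqrt (f t + δ)) = 1 / (2 * Real.sqrt (f t + δ)) * deriv f t by ring]
    exact this
  have hbound : ∀ t ∈ I, ‖deriv f t / (2 * Real.sqrt (f t + δ))‖ ≤ C / 2 := by
    intro t ht
    have hpos : (0:ℝ) < Real.sqrt (f t + δ) := Real.sqrt_pos.mpr (by linarith [hnn t ht])
    rw [Real.norm_eq_abs, abs_div, abs_of_pos (by positivity : (0:ℝ) < 2 * Real.sqrt (f t + δ)),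
      div_le_iff₀ (by positivity)]
    have h1 : Real.sqrt (f t) ≤ Real.sqrt (f t + δ) :=
      Real.sqrt_le_sqrt (by linarith)
    calc |deriv f t| ≤ C * Real.sqrt (f t) := hder t ht
      _ ≤ C * Real.sqrt (f t + δ) := by nlinarith
      _ = C / 2 * (2 * Real.sqrt (f t + δ)) := by ring
  have key : ‖g x - g 0‖ ≤ C / 2 * ‖x - 0‖ :=
    hconv.norm_image_sub_le_of_norm_hasDerivWithin_le hg' hbound h0 hx
  rw [Real.norm_eq_abs, Real.norm_eq_abs, sub_zero] at key
  -- compare √(f x) with g x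
  have hax : Real.sqrt (f x) ≤ g x := Real.sqrt_le_sqrt (by linarith [hδ])
  have ha0 : Real.sqrt (f 0) ≤ g 0 := Real.sqrt_le_sqrt (by linarith [hδ])
  have hbx : g x ≤ Real.sqrt (f x) + ε / 2 := hsq _ (hnn x hx)
  have hb0 : g 0 ≤ Real.sqrt (f 0) + ε / 2 := hsq _ (hnn 0 h0)
  rw [abs_le] at key ⊢
  constructor <;> [linarith [key.1]; linarith [key.2]]
end

section
/- Let S be the self-adjoint operator on L²(0,ε) associated with the quadratic form s[f] = ∫₀^ε |f'|² dt − α|f(0)|², on the domain {f ∈ H¹(0,ε) : f(ε) = 0}, with α > 0. Then as α → +∞, the lowest eigenvalue satisfies E₁(S) = −α² + O(e^{−εα}); in particular there exist α₀, K > 0 such that |E₁(S) + α²| ≤ K e^{−εα} for α ≥ α₀. -/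
/-- `lam` is an eigenvalue of the operator `S = −d²/dx²` on `(0, ε)` with Robin boundary
condition `f'(0) + α f(0) = 0` at `0` and Dirichlet condition `f(ε) = 0`, i.e. the
self-adjoint operator associated with the quadratic form
`s[f] = ∫₀^ε |f'|² − α |f(0)|²` on `{f ∈ H¹(0,ε) : f(ε) = 0}`. -/
def IsRDEigen (ε α lam : ℝ) : Prop :=
  ∃ f : ℝ → ℝ, ContDiff ℝ 2 f ∧ (∃ x ∈ Set.Icc 0 ε, f x ≠ 0) ∧
    (∀ x, deriv (deriv f) x = - lam * f x) ∧
    deriv f 0 + α * f 0 = 0 ∧ f ε = 0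

lemma ode_rigid (m : ℝ) (hm : 0 < m) (f : ℝ → ℝ) (hf : ContDiff ℝ 2 f)
    (hode : ∀ x, deriv (deriv f) x = m ^ 2 * f x) (x : ℝ) :
    f x = (f 0 + deriv f 0 / m) / 2 * Real.exp (m * x)
      + (f 0 - deriv f 0 / m) / 2 * Real.exp (-(m * x)) := by
  have hf1 : Differentiable ℝ f := hf.differentiable (by norm_num)
  have hfd : ContDiff ℝ 1 (deriv f) :=
    ((contDiff_succ_iff_deriv (n := 1)).mp (by exact_mod_cast hf)).2.2
  have hfd1 : Differentiable ℝ (deriv f) := hfd.differentiable (by norm_num)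
  set c : ℝ := deriv f 0 - m * f 0 with hc
  -- step 1 : h := (f' - m f) e^{m x} is constant
  set h : ℝ → ℝ := fun y => (deriv f y - m * f y) * Real.exp (m * y) with hh
  have hD : ∀ y, HasDerivAt h 0 y := by
    intro y
    have hexp : HasDerivAt (fun z : ℝ => Real.exp (m * z)) (Real.exp (m * y) * m) y := by
      simpa using ((hasDerivAt_id y).const_mul m).exp
    have := (((hfd1 y).hasDerivAt).sub ((hf1 y).hasDerivAt.const_mul m)).mul hexp
    convert this using 1
    · rfl
    · rfl
    · rfl
    rw [hode y, Pi.sub_apply]; ring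
  have hconst : ∀ y, h y = h 0 := fun y =>
    is_const_of_deriv_eq_zero (fun z => (hD z).differentiableAt) (fun z => (hD z).deriv) y 0
  have key : ∀ y, deriv f y - m * f y = c * Real.exp (-(m * y)) := by
    intro y
    have hy := hconst y
    simp only [hh, mul_zero, Real.exp_zero, mul_one] at hy
    have hEF : Real.exp (-(m * y)) * Real.exp (m * y) = 1 := by
      rw [← Real.exp_add]; simp
    linear_combination Real.exp (-(m * y)) * hy - (deriv f y - m * f y) * hEF
  -- step 2 : u := 2m f e^{-m x} + c e^{-2 m x} is constant
  set u : ℝ → ℝ := fun y => 2 * m * (f y * Real.exp (-(m * y))) + c * Real.exp (-(2 * m * y)) with hu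
  have hDu : ∀ y, HasDerivAt u 0 y := by
    intro y
    have hexp1 : HasDerivAt (fun z : ℝ => Real.exp (-(m * z))) (Real.exp (-(m * y)) * (-m)) y := by
      simpa using (((hasDerivAt_id y).const_mul m).neg).exp
    have hexp2 : HasDerivAt (fun z : ℝ => Real.exp (-(2 * m * z))) (Real.exp (-(2 * m * y)) * (-(2 * m))) y := by
      simpa using (((hasDerivAt_id y).const_mul (2 * m)).neg).exp
    have := ((((hf1 y).hasDerivAt).mul hexp1).const_mul (2 * m)).add (hexp2.const_mul c)
    convert this using 1
    · rfl
    · rfl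
    · rfl
    have h2 : Real.exp (-(2 * m * y)) = Real.exp (-(m * y)) * Real.exp (-(m * y)) := by
      rw [← Real.exp_add]; ring_nf
    rw [h2]
    linear_combination (-(2 * m * Real.exp (-(m * y)))) * key y
  have huconst : u x = u 0 :=
    is_const_of_deriv_eq_zero (fun z => (hDu z).differentiableAt) (fun z => (hDu z).deriv) x 0
  simp only [hu, mul_zero, neg_zero, Real.exp_zero, mul_one] at huconst
  have hEF : Real.exp (-(m * x)) * Real.exp (m * x) = 1 := by
    rw [← Real.exp_add]; simp
  have hGE : Real.exp (-(2 * m * x)) * Real.exp (m * x) = Real.exp (-(m * x)) := by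
    rw [← Real.exp_add]; ring_nf
  have goal2 : 2 * m * f x = (m * f 0 + deriv f 0) * Real.exp (m * x)
      + (m * f 0 - deriv f 0) * Real.exp (-(m * x)) := by
    linear_combination Real.exp (m * x) * huconst - 2 * m * (f x) * hEF - c * hGE
  have hm' : m ≠ 0 := ne_of_gt hm
  field_simp
  linarith [goal2]

lemma lower_bound (ε α lam : ℝ) (hε : 0 < ε) (hα : 0 < α) (h : IsRDEigen ε α lam) :
    -α ^ 2 ≤ lam := by
  by_contra hlt
  push_neg at hlt
  set m : ℝ := Real.sqrt (-lam) with hmdef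
  have hm2 : m ^ 2 = -lam := Real.sq_sqrt (by nlinarith)
  have hm0 : 0 ≤ m := Real.sqrt_nonneg _
  have hmα : α < m := by nlinarith
  have hm : 0 < m := lt_trans hα hmα
  obtain ⟨f, hf, ⟨x0, hx0, hfx0⟩, hode, hrob, hdir⟩ := h
  have hode' : ∀ x, deriv (deriv f) x = m ^ 2 * f x := by
    intro x; rw [hode x, hm2]
  have hform := ode_rigid m hm f hf hode'
  have hd : deriv f 0 = -(α * f 0) := by linarith
  have hE : (0:ℝ) < Real.exp (m * ε) := Real.exp_pos _
  have hF : (0:ℝ) < Real.exp (-(m * ε)) := Real.exp_pos _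
  have h0 : 0 = f 0 * ((1 - α / m) / 2 * Real.exp (m * ε) + (1 + α / m) / 2 * Real.exp (-(m * ε))) := by
    have hmε := hform ε
    rw [hdir, hd] at hmε
    linear_combination hmε
  have hC : 0 < (1 - α / m) / 2 * Real.exp (m * ε) + (1 + α / m) / 2 * Real.exp (-(m * ε)) := by
    have h1 : 0 < 1 - α / m := by
      rw [sub_pos, div_lt_one hm]; exact hmα
    have h2 : 0 < 1 + α / m := by positivity
    positivity
  have hf0 : f 0 = 0 := by
    rcases mul_eq_zero.mp h0.symm with h | h
    · exact h
    · exact absurd h (ne_of_gt hC)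
  have : f x0 = 0 := by
    rw [hform x0, hf0, hd, hf0]; ring
  exact hfx0 this

lemma root_exists (ε α : ℝ) (hε : 0 < ε) (hα : 4 / ε ≤ α) :
    ∃ k ∈ Set.Icc (3 / ε) α, α * Real.sinh (k * ε) = k * Real.cosh (k * ε) := by
  set g : ℝ → ℝ := fun k => α * Real.sinh (k * ε) - k * Real.cosh (k * ε) with hg
  have hcont : ContinuousOn g (Set.Icc (3 / ε) α) := by
    apply Continuous.continuousOn; fun_prop
  have hab : 3 / ε ≤ α := by
    have : (3:ℝ)/ε ≤ 4/ε := by gcongr; norm_num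
    linarith
  have he2 : (2:ℝ) ≤ Real.exp 1 := by
    have := Real.add_one_le_exp (1:ℝ); linarith
  have he3 : (8:ℝ) ≤ Real.exp 3 := by
    have h1 : Real.exp 3 = Real.exp 1 ^ 3 := by
      rw [← Real.exp_nat_mul]; norm_num
    have h2 : (2:ℝ)^3 ≤ Real.exp 1 ^ 3 := pow_le_pow_left₀ (by norm_num) he2 3
    rw [h1]; norm_num at h2 ⊢; linarith
  have hga : g α ≤ 0 := by
    have h1 : Real.sinh (α * ε) - Real.cosh (α * ε) = -Real.exp (-(α * ε)) := by
      have := Real.cosh_sub_sinh (α * ε); linarith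
    have h2 : 0 < Real.exp (-(α * ε)) := Real.exp_pos _
    have hα0 : 0 < α := by
      have : (0:ℝ) < 4 / ε := by positivity
      linarith
    simp only [hg]
    nlinarith
  have hg3 : 0 ≤ g (3 / ε) := by
    have h3 : 3 / ε * ε = 3 := by field_simp
    simp only [hg, h3]
    rw [Real.sinh_eq, Real.cosh_eq]
    have h4 : Real.exp (-3) = (Real.exp 3)⁻¹ := Real.exp_neg _
    have h5 : 0 < Real.exp 3 := Real.exp_pos _
    rw [h4]
    rw [div_le_iff₀ hε] at hα
    have key : 3 / ε * ((Real.exp 3 + (Real.exp 3)⁻¹) / 2) ≤ α * ((Real.exp 3 - (Real.exp 3)⁻¹) / 2) := by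
      rw [div_mul_eq_mul_div, div_le_iff₀ hε]
      have h6 : (Real.exp 3)⁻¹ ≤ 1/8 := by
        rw [inv_le_comm₀ (by positivity) (by norm_num)]; linarith
      have h7 : 0 < (Real.exp 3)⁻¹ := by positivity
      -- 3 (e³ + e⁻³) ≤ (4/ε)·ε (e³ - e⁻³)/... : need 3(e³+t) ≤ 4(e³ - t) with t ≤ 1/8, e³ ≥ 8
      have h8 : (0:ℝ) ≤ Real.exp 3 - (Real.exp 3)⁻¹ := by nlinarith
      nlinarith [mul_nonneg (by linarith : (0:ℝ) ≤ α * ε - 4) h8]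
    linarith
  have := intermediate_value_Icc' hab hcont
  have h0mem : (0:ℝ) ∈ Set.Icc (g α) (g (3 / ε)) := ⟨hga, hg3⟩
  obtain ⟨k, hk, hgk⟩ := this h0mem
  exact ⟨k, hk, by simp only [hg] at hgk; linarith⟩

-- the explicit eigenfunction shows -k² is an eigenvalue
lemma eigen_mem (ε α k : ℝ) (hε : 0 < ε) (hk : 0 < k)
    (heq : α * Real.sinh (k * ε) = k * Real.cosh (k * ε)) :
    IsRDEigen ε α (-k ^ 2) := by
  refine ⟨fun x => Real.sinh (k * ε - k * x), ?_, ?_, ?_, ?_, ?_⟩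
  · exact (Real.contDiff_sinh.comp (contDiff_const.sub (contDiff_const.mul contDiff_id))).of_le le_top
  · refine ⟨0, ⟨le_refl 0, hε.le⟩, ?_⟩
    have : 0 < Real.sinh (k * ε - k * 0) := by
      have : 0 < k * ε - k * 0 := by nlinarith
      exact by positivity
    exact ne_of_gt this
  · have hD : ∀ x : ℝ, HasDerivAt (fun y => Real.sinh (k * ε - k * y))
        (Real.cosh (k * ε - k * x) * (0 - k * 1)) x := by
      intro x
      exact ((hasDerivAt_const x (k * ε)).sub ((hasDerivAt_id x).const_mul k)).sinh
    have hderiv : deriv (fun y => Real.sinh (k * ε - k * y))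
        = fun x => Real.cosh (k * ε - k * x) * (0 - k * 1) := funext fun x => (hD x).deriv
    have hD2 : ∀ x : ℝ, HasDerivAt (fun y => Real.cosh (k * ε - k * y) * (0 - k * 1))
        (Real.sinh (k * ε - k * x) * (0 - k * 1) * (0 - k * 1)) x := by
      intro x
      exact (((hasDerivAt_const x (k * ε)).sub ((hasDerivAt_id x).const_mul k)).cosh).mul_const _
    intro x
    rw [hderiv, (hD2 x).deriv]
    ring
  · have hD : HasDerivAt (fun y => Real.sinh (k * ε - k * y))
        (Real.cosh (k * ε - k * 0) * (0 - k * 1)) 0 :=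
      ((hasDerivAt_const 0 (k * ε)).sub ((hasDerivAt_id 0).const_mul k)).sinh
    rw [hD.deriv]
    simp only [mul_zero, sub_zero]
    linarith
  · simp

lemma aux_s3 (ε α : ℝ) (hε : 0 < ε) (hα0 : 0 < α) (E : ℝ) :
    4 * α ^ 2 * (E * (216 / (ε ^ 3 * α ^ 3))) = 864 / (ε ^ 3 * α) * E := by
  field_simp
  ring

lemma quant_bound (ε α k : ℝ) (hε : 0 < ε) (hα : 4 / ε ≤ α) (hk3 : 3 / ε ≤ k) (hkα : k ≤ α)
    (heq : α * Real.sinh (k * ε) = k * Real.cosh (k * ε)) :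
    α ^ 2 - k ^ 2 ≤ 216 / ε ^ 2 * Real.exp (-ε * α) ∧ k ^ 2 ≤ α ^ 2 := by
  have hα0 : 0 < α := lt_of_lt_of_le (by positivity) hα
  have hk0 : 0 < k := lt_of_lt_of_le (by positivity) hk3
  have hkε : 3 ≤ k * ε := by
    rw [div_le_iff₀ hε] at hk3; linarith
  have hCpos : 0 < Real.cosh (k * ε) := Real.cosh_pos _
  have c1 : (α ^ 2 - k ^ 2) * Real.cosh (k * ε) ^ 2 = α ^ 2 := by
    have hsq := Real.cosh_sq (k * ε)
    linear_combination (α * Real.sinh (k * ε) + k * Real.cosh (k * ε)) * heq + α ^ 2 * hsq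
  have hne : α ^ 2 - k ^ 2 = α ^ 2 / Real.cosh (k * ε) ^ 2 := by
    field_simp [ne_of_gt hCpos] at c1 ⊢
    linarith [c1]
  have hd0 : 0 ≤ α ^ 2 - k ^ 2 := by rw [hne]; positivity
  have hk2 : k ^ 2 ≤ α ^ 2 := by linarith
  -- cosh t ≥ e^t / 2
  have c2 : Real.exp (k * ε) / 2 ≤ Real.cosh (k * ε) := by
    rw [Real.cosh_eq]
    have := Real.exp_pos (-(k * ε))
    linarith
  have hexp_pos : (0:ℝ) < Real.exp (k * ε) := Real.exp_pos _
  -- first bound : α² - k² ≤ 4 α² exp(-(kε))²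
  have B1 : α ^ 2 - k ^ 2 ≤ 4 * α ^ 2 * Real.exp (-(k * ε)) ^ 2 := by
    have hE2 : Real.exp (k * ε) ^ 2 / 4 ≤ Real.cosh (k * ε) ^ 2 := by nlinarith
    have h1 : (α ^ 2 - k ^ 2) * (Real.exp (k * ε) ^ 2 / 4) ≤ α ^ 2 := by nlinarith
    have h2 : Real.exp (-(k * ε)) = (Real.exp (k * ε))⁻¹ := Real.exp_neg _
    rw [h2]
    rw [← sub_nonneg]
    have h3 : 4 * α ^ 2 * ((Real.exp (k * ε))⁻¹) ^ 2 - (α ^ 2 - k ^ 2)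
        = (α ^ 2 - (α ^ 2 - k ^ 2) * (Real.exp (k * ε) ^ 2 / 4)) * (4 * ((Real.exp (k*ε))⁻¹) ^ 2) := by
      field_simp
    rw [h3]
    exact mul_nonneg (by linarith) (by positivity)
  -- so since kε ≥ 3 : exp(-(kε))² ≤ exp(-6) ≤ 1/64, hence k ≥ (3/4) α
  have he2 : (2:ℝ) ≤ Real.exp 1 := by have := Real.add_one_le_exp (1:ℝ); linarith
  have he6 : (64:ℝ) ≤ Real.exp 6 := by
    have h1 : Real.exp 6 = Real.exp 1 ^ 6 := by rw [← Real.exp_nat_mul]; norm_num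
    have h2 : (2:ℝ)^6 ≤ Real.exp 1 ^ 6 := pow_le_pow_left₀ (by norm_num) he2 6
    rw [h1]; norm_num at h2 ⊢; linarith
  have hsmall : Real.exp (-(k * ε)) ^ 2 ≤ 1 / 64 := by
    have h1 : Real.exp (-(k * ε)) ^ 2 = Real.exp (-(2 * (k * ε))) := by
      rw [← Real.exp_nat_mul]; ring_nf
    rw [h1]
    have h2 : Real.exp (-(2 * (k * ε))) ≤ Real.exp (-6) := by
      apply Real.exp_le_exp.mpr; linarith
    have h3 : Real.exp (-6) = (Real.exp 6)⁻¹ := Real.exp_neg _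
    have h4 : (Real.exp 6)⁻¹ ≤ 1 / 64 := by
      rw [inv_le_comm₀ (Real.exp_pos 6) (by norm_num)]; linarith
    linarith
  have hk34 : 3 / 4 * α ≤ k := by
    have h1 : α ^ 2 - k ^ 2 ≤ α ^ 2 / 16 := by nlinarith
    nlinarith
  -- second bound : exp(-(kε))² ≤ exp(-εα) * exp(-(εα/2))
  have B2 : Real.exp (-(k * ε)) ^ 2 ≤ Real.exp (-ε * α) * Real.exp (-(ε * α / 2)) := by
    have h1 : Real.exp (-(k * ε)) ^ 2 = Real.exp (-(2 * (k * ε))) := by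
      rw [← Real.exp_nat_mul]; ring_nf
    have h2 : Real.exp (-ε * α) * Real.exp (-(ε * α / 2)) = Real.exp (-(3/2 * (ε * α))) := by
      rw [← Real.exp_add]; ring_nf
    rw [h1, h2]
    apply Real.exp_le_exp.mpr
    nlinarith
  -- exp(-(εα/2)) ≤ 216 / (ε³ α³)
  have B3 : Real.exp (-(ε * α / 2)) ≤ 216 / (ε ^ 3 * α ^ 3) := by
    have h1 : (ε * α / 6) ^ 3 ≤ Real.exp (ε * α / 2) := by
      have h2 : Real.exp (ε * α / 2) = Real.exp (ε * α / 6) ^ 3 := by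
        rw [← Real.exp_nat_mul]; ring_nf
      have h3 : ε * α / 6 ≤ Real.exp (ε * α / 6) := by
        have := Real.add_one_le_exp (ε * α / 6); linarith
      have h4 : (0:ℝ) ≤ ε * α / 6 := by positivity
      rw [h2]
      exact pow_le_pow_left₀ h4 h3 3
    have h5 : Real.exp (-(ε * α / 2)) = (Real.exp (ε * α / 2))⁻¹ := Real.exp_neg _
    rw [h5]
    rw [inv_le_comm₀ (Real.exp_pos _) (by positivity), inv_div]
    calc (ε ^ 3 * α ^ 3) / 216 = (ε * α / 6) ^ 3 := by ring
    _ ≤ Real.exp (ε * α / 2) := h1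
  -- combine
  have hεα : 4 ≤ ε * α := by rw [div_le_iff₀ hε] at hα; linarith
  have final : α ^ 2 - k ^ 2 ≤ 216 / ε ^ 2 * Real.exp (-ε * α) := by
    have hEneg : (0:ℝ) < Real.exp (-ε * α) := Real.exp_pos _
    have s1 : α ^ 2 - k ^ 2 ≤ 4 * α ^ 2 * (Real.exp (-ε * α) * Real.exp (-(ε * α / 2))) :=
      B1.trans (mul_le_mul_of_nonneg_left B2 (by positivity))
    have s2 : 4 * α ^ 2 * (Real.exp (-ε * α) * Real.exp (-(ε * α / 2)))
        ≤ 4 * α ^ 2 * (Real.exp (-ε * α) * (216 / (ε ^ 3 * α ^ 3))) := by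
      gcongr
    have s3 := aux_s3 ε α hε hα0 (Real.exp (-ε * α))
    have s4 : 864 / (ε ^ 3 * α) ≤ 216 / ε ^ 2 := by
      rw [div_le_div_iff₀ (by positivity) (by positivity)]
      calc 864 * ε ^ 2 = 216 * ε ^ 2 * 4 := by ring
      _ ≤ 216 * ε ^ 2 * (ε * α) := by
          have h9 : (0:ℝ) ≤ 216 * ε ^ 2 := by positivity
          exact mul_le_mul_of_nonneg_left hεα h9
      _ = 216 * (ε ^ 3 * α) := by ring
    have s5 : 864 / (ε ^ 3 * α) * Real.exp (-ε * α) ≤ 216 / ε ^ 2 * Real.exp (-ε * α) :=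
      mul_le_mul_of_nonneg_right s4 hEneg.le
    calc α ^ 2 - k ^ 2 ≤ 4 * α ^ 2 * (Real.exp (-ε * α) * Real.exp (-(ε * α / 2))) := s1
    _ ≤ 4 * α ^ 2 * (Real.exp (-ε * α) * (216 / (ε ^ 3 * α ^ 3))) := s2
    _ = 864 / (ε ^ 3 * α) * Real.exp (-ε * α) := s3
    _ ≤ 216 / ε ^ 2 * Real.exp (-ε * α) := s5
  exact ⟨final, hk2⟩

/-- As `α → +∞`, the lowest eigenvalue of `S` satisfies `E₁(S) = −α² + O(e^{−εα})`:
there are `α₀, K > 0` such that `|E₁(S) + α²| ≤ K e^{−εα}` for all `α ≥ α₀`. -/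
theorem stmt_5 (ε : ℝ) (hε : 0 < ε) :
    ∃ α₀ K : ℝ, 0 < α₀ ∧ 0 < K ∧ ∀ α ≥ α₀,
      |sInf {lam | IsRDEigen ε α lam} + α ^ 2| ≤ K * Real.exp (-ε * α) := by
  refine ⟨4 / ε, 216 / ε ^ 2, by positivity, by positivity, ?_⟩
  intro α hα
  have hα0 : 0 < α := lt_of_lt_of_le (by positivity) hα
  obtain ⟨k, ⟨hk3, hkα⟩, heq⟩ := root_exists ε α hε hα
  have hk0 : 0 < k := lt_of_lt_of_le (by positivity) hk3
  have hmem : IsRDEigen ε α (-k ^ 2) := eigen_mem ε α k hε hk0 heq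
  have hbdd : ∀ lam ∈ {lam | IsRDEigen ε α lam}, -α ^ 2 ≤ lam :=
    fun lam hl => lower_bound ε α lam hε hα0 hl
  have h1 : -α ^ 2 ≤ sInf {lam | IsRDEigen ε α lam} := le_csInf ⟨-k ^ 2, hmem⟩ hbdd
  have h2 : sInf {lam | IsRDEigen ε α lam} ≤ -k ^ 2 :=
    csInf_le ⟨-α ^ 2, fun lam hl => hbdd lam hl⟩ hmem
  obtain ⟨hq, hk2⟩ := quant_bound ε α k hε hα hk3 hkα heq
  have hEpos : (0:ℝ) < Real.exp (-ε * α) := Real.exp_pos _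
  rw [abs_le]
  constructor
  · have : (0:ℝ) ≤ 216 / ε ^ 2 * Real.exp (-ε * α) := by positivity
    linarith
  · linarith
end
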